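/- Phase retrieval in ℝ^M (M ≥ 2) is possible using 2M−1 subspaces: there exist subspaces W₁,...,W_{2M−1} of ℝ^M, each of dimension at most M−2, whose orthogonal projections P_n make the map x ↦ (‖P_n x‖²)_{n=1}^{2M−1} injective on ℝ^M modulo global sign. Moreover the dimensions of these subspaces can be arbitrarily prescribed below M−1. -/

import Mathlib

open Submodule RealInnerProductSpace Finset Module

variable {E : Type*} [NormedAddCommGroup E] [InnerProductSpace ℝ E]

lemma inner_span_zero {s : Set E} {w : E} (h : ∀ u ∈ s, ⟪u, w⟫ = 0) :
    ∀ u ∈ span ℝ s, ⟪u, w⟫ = 0 := by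
  intro u hu
  induction hu using Submodule.span_induction with
  | mem u hu => exact h u hu
  | zero => simp
  | add u v _ _ hu hv => rw [inner_add_left, hu, hv, add_zero]
  | smul c u _ hu => rw [real_inner_smul_left, hu, mul_zero]

variable [FiniteDimensional ℝ E]

lemma finrank_span_orthonormal {ι : Type*} [DecidableEq ι] (s : Finset ι) (v : ι → E)
    (hv : ∀ i ∈ s, ∀ j ∈ s, ⟪v i, v j⟫ = if i = j then 1 else 0) :
    finrank ℝ (span ℝ (v '' s)) = s.card := by
  have horth : Orthonormal ℝ (fun i : s => v i) := by
    rw [orthonormal_iff_ite]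
    intro i j
    rw [hv i i.2 j j.2]
    by_cases h : i = j
    · simp [h]
    · rw [if_neg h, if_neg (fun hh => h (Subtype.ext hh))]
  have := finrank_span_eq_card horth.linearIndependent
  rw [Fintype.card_coe] at this
  rw [Set.image_eq_range]
  exact this

lemma proj_norm_sq {ι : Type*} [DecidableEq ι] (s : Finset ι) (v : ι → E)
    (hv : ∀ i ∈ s, ∀ j ∈ s, ⟪v i, v j⟫ = if i = j then 1 else 0) (x : E) :
    ‖orthogonalProjection (span ℝ (v '' s)) x‖ ^ 2 = ∑ i ∈ s, ⟪v i, x⟫ ^ 2 := by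
  set W := span ℝ (v '' (s : Set ι))
  set p : E := ∑ i ∈ s, ⟪v i, x⟫ • v i with hp
  have hpW : p ∈ W := by
    refine sum_mem fun i hi => smul_mem _ _ (subset_span ⟨i, hi, rfl⟩)
  have hinner : ∀ j ∈ s, ⟪v j, p⟫ = ⟪v j, x⟫ := by
    intro j hj
    rw [hp, inner_sum]
    have : ∀ i ∈ s, ⟪v j, ⟪v i, x⟫ • v i⟫ = if i = j then ⟪v i, x⟫ else 0 := by
      intro i hi
      rw [real_inner_smul_right, hv j hj i hi]
      by_cases h : i = j
      · subst h; simp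
      · rw [if_neg (fun hh => h hh.symm), if_neg h, mul_zero]
    rw [Finset.sum_congr rfl this, Finset.sum_ite_eq' s j (fun i => ⟪v i, x⟫), if_pos hj]
  have horth : x - p ∈ Wᗮ := by
    rw [Submodule.mem_orthogonal]
    intro u hu
    refine inner_span_zero ?_ u hu
    rintro u ⟨i, hi, rfl⟩
    rw [inner_sub_right, hinner i hi, sub_self]
  have hproj : (orthogonalProjection W x : E) = p := by
    rw [← Submodule.starProjection_apply, eq_starProjection_of_mem_orthogonal hpW horth]
  have hnorm : ‖(orthogonalProjection W x : W)‖ = ‖p‖ := by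
    rw [← hproj]; rfl
  rw [hnorm]
  have : ‖p‖ ^ 2 = ⟪p, p⟫ := (real_inner_self_eq_norm_sq p).symm
  rw [this, hp, sum_inner]
  refine Finset.sum_congr rfl fun i hi => ?_
  rw [real_inner_smul_left, inner_sum]
  have : ∀ j ∈ s, ⟪v i, ⟪v j, x⟫ • v j⟫ = if j = i then ⟪v j, x⟫ else 0 := by
    intro j hj
    rw [real_inner_smul_right, hv i hi j hj]
    by_cases h : j = i
    · subst h; simp
    · rw [if_neg (fun hh => h hh.symm), if_neg h, mul_zero]
  rw [Finset.sum_congr rfl this, Finset.sum_ite_eq' s i (fun j => ⟪v j, x⟫), if_pos hi, sq]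
lemma exists_avoid (V : Submodule ℝ E) (s : Finset (Submodule ℝ E))
    (h : ∀ U ∈ s, ¬ V ≤ U) : ∃ v ∈ V, ∀ U ∈ s, v ∉ U := by
  by_contra hc
  push_neg at hc
  have hcov : ⋃ U : s, ((U : Submodule ℝ E).comap V.subtype : Set V) = Set.univ := by
    ext v
    simp only [Set.mem_iUnion, Set.mem_univ, iff_true]
    obtain ⟨U, hU, hvU⟩ := hc v v.2
    exact ⟨⟨U, hU⟩, hvU⟩
  obtain ⟨⟨U, hU⟩, htop⟩ := Subspace.exists_eq_top_of_iUnion_eq_univ hcov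
  refine h U hU fun v hv => ?_
  have : (⟨v, hv⟩ : V) ∈ (U.comap V.subtype) := by rw [htop]; trivial
  simpa using this

lemma orthonormal_expansion {ι : Type*} [DecidableEq ι] (s : Finset ι) (v : ι → E)
    (hv : ∀ i ∈ s, ∀ j ∈ s, ⟪v i, v j⟫ = if i = j then 1 else 0) {z : E}
    (hz : z ∈ span ℝ (v '' s)) : z = ∑ i ∈ s, ⟪v i, z⟫ • v i := by
  set p : E := ∑ i ∈ s, ⟪v i, z⟫ • v i with hp
  have hpW : p ∈ span ℝ (v '' (s : Set ι)) :=
    sum_mem fun i hi => smul_mem _ _ (subset_span ⟨i, hi, rfl⟩)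
  have hdiff : ∀ j ∈ s, ⟪v j, z - p⟫ = 0 := by
    intro j hj
    rw [inner_sub_right, hp, inner_sum]
    have : ∀ i ∈ s, ⟪v j, ⟪v i, z⟫ • v i⟫ = if i = j then ⟪v i, z⟫ else 0 := by
      intro i hi
      rw [real_inner_smul_right, hv j hj i hi]
      by_cases h : i = j
      · subst h; simp
      · rw [if_neg (fun hh => h hh.symm), if_neg h, mul_zero]
    rw [Finset.sum_congr rfl this, Finset.sum_ite_eq' s j (fun i => ⟪v i, z⟫), if_pos hj,
      sub_self]
  have hzp : z - p ∈ span ℝ (v '' (s : Set ι)) := Submodule.sub_mem _ hz hpW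
  have : ⟪z - p, z - p⟫ = 0 := by
    have h0 : ∀ u ∈ (v '' (s : Set ι)), ⟪u, z - p⟫ = 0 := by
      rintro u ⟨i, hi, rfl⟩; exact hdiff i hi
    exact inner_span_zero h0 _ hzp
  have := inner_self_eq_zero.mp this
  rw [sub_eq_zero] at this
  exact this

lemma span_shrink {ι : Type*} [DecidableEq ι] (s t : Finset ι) (hts : t ⊆ s) (v : ι → E)
    (hv : ∀ i ∈ s, ∀ j ∈ s, ⟪v i, v j⟫ = if i = j then 1 else 0) {z : E}
    (hz : z ∈ span ℝ (v '' s)) (h0 : ∀ b ∈ t, ⟪v b, z⟫ = 0) :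
    z ∈ span ℝ (v '' ↑(s \ t)) := by
  rw [orthonormal_expansion s v hv hz]
  rw [← Finset.sum_subset (Finset.sdiff_subset : s \ t ⊆ s) (by
    intro x hx hx2
    have hxt : x ∈ t := by
      by_contra hxt
      exact hx2 (Finset.mem_sdiff.mpr ⟨hx, hxt⟩)
    rw [h0 x hxt, zero_smul])]
  exact sum_mem fun i hi => smul_mem _ _ (subset_span ⟨i, hi, rfl⟩)
/-- indicator vector of a finset -/
noncomputable def indic {N : ℕ} (T : Finset (Fin N)) : EuclideanSpace ℝ (Fin N) :=
  ∑ j ∈ T, EuclideanSpace.single j (1 : ℝ)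

lemma inner_indic {N : ℕ} (T : Finset (Fin N)) (a : EuclideanSpace ℝ (Fin N)) :
    ⟪indic T, a⟫ = ∑ j ∈ T, a j := by
  rw [indic, sum_inner]
  refine Finset.sum_congr rfl fun j hj => ?_
  rw [EuclideanSpace.inner_single_left]
  simp

lemma indic_apply {N : ℕ} (T : Finset (Fin N)) (j : Fin N) :
    indic T j = if j ∈ T then (1:ℝ) else 0 := by
  rw [indic]
  rw [show (∑ i ∈ T, EuclideanSpace.single i (1:ℝ)) j
      = ∑ i ∈ T, (EuclideanSpace.single i (1:ℝ) : EuclideanSpace ℝ (Fin N)) j from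
    by rw [WithLp.ofLp_sum, Finset.sum_apply]]
  simp [EuclideanSpace.single_apply, eq_comm]

lemma span_indic_top {N : ℕ} (r : ℕ) (h1 : 1 ≤ r) (h2 : r ≤ N - 1) (hN : 2 ≤ N) :
    span ℝ {x : EuclideanSpace ℝ (Fin N) | ∃ T : Finset (Fin N), T.card = r ∧ x = indic T} = ⊤ := by
  set S := {x : EuclideanSpace ℝ (Fin N) | ∃ T : Finset (Fin N), T.card = r ∧ x = indic T}
  rw [eq_top_iff]
  have hsingle : ∀ j : Fin N, (EuclideanSpace.single j (1:ℝ)) ∈ span ℝ S := by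
    intro j
    -- pick T₀ of card r avoiding j
    have hcard : r ≤ (Finset.univ.erase j).card := by
      rw [Finset.card_erase_of_mem (Finset.mem_univ j), Finset.card_univ, Fintype.card_fin]
      exact h2.trans (le_refl _)
    obtain ⟨T₀, hT₀sub, hT₀card⟩ := Finset.exists_subset_card_eq hcard
    have hjT₀ : j ∉ T₀ := fun hj => (Finset.mem_erase.mp (hT₀sub hj)).1 rfl
    -- identity: ∑_{i ∈ T₀} indic (insert j (T₀.erase i)) = (r-1) • indic T₀ + r • single j 1
    have key : ∑ i ∈ T₀, indic (insert j (T₀.erase i))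
        = ((r:ℝ) - 1) • indic T₀ + (r:ℝ) • EuclideanSpace.single j (1:ℝ) := by
      have hterm : ∀ i ∈ T₀, indic (insert j (T₀.erase i))
          = indic T₀ - EuclideanSpace.single i (1:ℝ) + EuclideanSpace.single j (1:ℝ) := by
        intro i hi
        rw [indic, Finset.sum_insert (fun hj' => hjT₀ ((Finset.mem_erase.mp hj').2)), indic]
        rw [Finset.sum_erase_eq_sub hi]
        abel
      rw [Finset.sum_congr rfl hterm]
      rw [Finset.sum_add_distrib, Finset.sum_sub_distrib, Finset.sum_const, Finset.sum_const,
        hT₀card, indic]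
      simp only [← Nat.cast_smul_eq_nsmul ℝ]
      module
    have hT₀span : indic T₀ ∈ span ℝ S := subset_span ⟨T₀, hT₀card, rfl⟩
    have hsum : ∑ i ∈ T₀, indic (insert j (T₀.erase i)) ∈ span ℝ S := by
      refine sum_mem fun i hi => subset_span ⟨_, ?_, rfl⟩
      rw [Finset.card_insert_of_notMem (fun hj' => hjT₀ ((Finset.mem_erase.mp hj').2)),
        Finset.card_erase_of_mem hi, hT₀card]
      omega
    have : (r:ℝ) • EuclideanSpace.single j (1:ℝ) ∈ span ℝ S := by
      have := Submodule.sub_mem _ hsum (Submodule.smul_mem _ ((r:ℝ)-1) hT₀span)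
      rw [key] at this
      simpa using this
    have hr : (r:ℝ) ≠ 0 := by positivity
    have := Submodule.smul_mem _ (r:ℝ)⁻¹ this
    rwa [smul_smul, inv_mul_cancel₀ hr, one_smul] at this
  intro x _
  have : x = ∑ j : Fin N, x j • EuclideanSpace.single j (1:ℝ) := by
    apply PiLp.ext
    intro j
    rw [show (∑ i : Fin N, x i • EuclideanSpace.single i (1:ℝ) : EuclideanSpace ℝ (Fin N)) j
        = ∑ i : Fin N, (x i • (EuclideanSpace.single i (1:ℝ) : EuclideanSpace ℝ (Fin N))) j from
      by rw [WithLp.ofLp_sum, Finset.sum_apply]]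
    simp [EuclideanSpace.single_apply, eq_comm]
  rw [this]
  exact sum_mem fun j _ => Submodule.smul_mem _ _ (hsingle j)

lemma exists_indep_subsets (N : ℕ) (hN : 2 ≤ N) (r : Fin N → ℕ)
    (hr : ∀ i, 1 ≤ r i ∧ r i ≤ N - 1) :
    ∃ S : Fin N → Finset (Fin N), (∀ i, (S i).card = r i) ∧
      LinearIndependent ℝ (fun i => indic (S i)) := by
  suffices h : ∀ k : ℕ, ∀ hkN : k ≤ N, ∃ S : Fin k → Finset (Fin N),
      (∀ i, (S i).card = r ⟨i.1, by omega⟩) ∧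
      LinearIndependent ℝ (fun i => indic (S i)) by
    obtain ⟨S, h1, h2⟩ := h N le_rfl
    refine ⟨fun i => S i, fun i => (h1 i).trans (congrArg r (Fin.ext rfl)), h2⟩
  intro k
  induction k with
  | zero => exact fun _ => ⟨fun i => ∅, fun i => i.elim0, linearIndependent_empty_type⟩
  | succ k ih =>
    intro hk
    obtain ⟨S, hcard, hindep⟩ := ih (by omega)
    have hne : span ℝ (Set.range fun i : Fin k => indic (S i)) ≠ ⊤ := by
      intro htop
      have h1 : finrank ℝ (span ℝ (Set.range fun i : Fin k => indic (S i))) ≤ k := by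
        simpa [Set.finrank] using finrank_range_le_card (fun i : Fin k => indic (S i))
      rw [htop, finrank_top, finrank_euclideanSpace, Fintype.card_fin] at h1
      omega
    set m : Fin N := ⟨k, by omega⟩ with hm
    have hrk := hr m
    obtain ⟨T, hTcard, hTnotin⟩ : ∃ T : Finset (Fin N), T.card = r m ∧
        indic T ∉ span ℝ (Set.range fun i : Fin k => indic (S i)) := by
      by_contra hc
      push_neg at hc
      have : span ℝ {x : EuclideanSpace ℝ (Fin N) |
          ∃ T : Finset (Fin N), T.card = r m ∧ x = indic T}
          ≤ span ℝ (Set.range fun i : Fin k => indic (S i)) := by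
        rw [span_le]
        rintro x ⟨T, hT, rfl⟩
        exact hc T hT
      rw [span_indic_top _ hrk.1 hrk.2 hN] at this
      exact hne (top_le_iff.mp this)
    refine ⟨(Fin.snoc S T : Fin (k+1) → Finset (Fin N)), ?_, ?_⟩
    · intro i
      induction i using Fin.lastCases with
      | last =>
        rw [Fin.snoc_last, hTcard]
        exact congrArg r (Fin.ext rfl)
      | cast j =>
        rw [Fin.snoc_castSucc, hcard j]
        exact congrArg r (Fin.ext rfl)
    · rw [show (fun i : Fin (k+1) => indic ((Fin.snoc S T : Fin (k+1) → Finset (Fin N)) i))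
          = Fin.snoc (fun i : Fin k => indic (S i)) (indic T) by
        funext i
        induction i using Fin.lastCases with
        | last => rw [Fin.snoc_last, Fin.snoc_last]
        | cast j => rw [Fin.snoc_castSucc, Fin.snoc_castSucc]]
      exact linearIndependent_fin_snoc.mpr ⟨hindep, hTnotin⟩

lemma recover (N : ℕ) (hN : 2 ≤ N) (S : Fin N → Finset (Fin N))
    (hS : LinearIndependent ℝ (fun i => indic (S i)))
    (a : EuclideanSpace ℝ (Fin N)) (ha : ∀ n, ∑ j ∈ S n, a j = 0) : a = 0 := by
  haveI : Nonempty (Fin N) := ⟨⟨0, by omega⟩⟩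
  have hspan : span ℝ (Set.range fun i => indic (S i)) = ⊤ := by
    apply LinearIndependent.span_eq_top_of_card_eq_finrank hS
    rw [Fintype.card_fin, finrank_euclideanSpace, Fintype.card_fin]
  have hzero : ∀ u ∈ span ℝ (Set.range fun i => indic (S i)), ⟪u, a⟫ = 0 := by
    apply inner_span_zero
    rintro u ⟨i, rfl⟩
    rw [inner_indic]
    exact ha i
  have := hzero a (by rw [hspan]; trivial)
  exact inner_self_eq_zero.mp this
section Euc
variable {M : ℕ}

noncomputable def ee (M : ℕ) (i : Fin M) : EuclideanSpace ℝ (Fin M) :=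
  EuclideanSpace.single i (1 : ℝ)

lemma ee_orth : ∀ i j : Fin M, ⟪ee M i, ee M j⟫ = if i = j then (1:ℝ) else 0 := by
  intro i j
  rw [ee, ee, EuclideanSpace.inner_single_left]
  simp [EuclideanSpace.single_apply, eq_comm]

lemma inner_ee (i : Fin M) (z : EuclideanSpace ℝ (Fin M)) : ⟪ee M i, z⟫ = z i := by
  rw [ee, EuclideanSpace.inner_single_left]
  simp

lemma span_ee_top : span ℝ (ee M '' ↑(Finset.univ : Finset (Fin M))) = ⊤ := by
  rw [eq_top_iff]
  intro x _
  have : x = ∑ j : Fin M, x j • ee M j := by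
    apply PiLp.ext
    intro j
    rw [show (∑ i : Fin M, x i • ee M i : EuclideanSpace ℝ (Fin M)) j
        = ∑ i : Fin M, (x i • ee M i : EuclideanSpace ℝ (Fin M)) j from
      by rw [WithLp.ofLp_sum, Finset.sum_apply]]
    simp [ee, EuclideanSpace.single_apply, eq_comm]
  rw [this]
  exact sum_mem fun j _ => smul_mem _ _ (subset_span ⟨j, by simp, rfl⟩)

end Euc
section GG
open Submodule RealInnerProductSpace Finset Module

lemma exists_good_g (M : ℕ) (hM : 3 ≤ M) :
    ∃ g : ℕ → EuclideanSpace ℝ (Fin M),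
      (∀ a b : ℕ, a < M - 1 → b < M - 1 → ⟪g a, g b⟫ = if a = b then (1:ℝ) else 0) ∧
      (∀ (B : Finset ℕ) (K : Finset (Fin M)), (∀ b ∈ B, b < M - 1) → B.card + K.card ≤ M →
        ∀ w, w ∈ span ℝ (g '' B) → w ∈ span ℝ (ee M '' K) → w = 0) := by
  classical
  suffices h : ∀ n : ℕ, n ≤ M - 1 → ∃ g : ℕ → EuclideanSpace ℝ (Fin M),
      (∀ a b : ℕ, a < n → b < n → ⟪g a, g b⟫ = if a = b then (1:ℝ) else 0) ∧
      (∀ (B : Finset ℕ) (K : Finset (Fin M)), (∀ b ∈ B, b < n) → B.card + K.card ≤ M →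
        ∀ w, w ∈ span ℝ (g '' B) → w ∈ span ℝ (ee M '' K) → w = 0) ∧
      (∀ (B : Finset ℕ) (K : Finset (Fin M)), (∀ b ∈ B, b < n) → M ≤ B.card + K.card →
        span ℝ (g '' B ∪ ee M '' K) = ⊤) by
    obtain ⟨g, h1, h2, _⟩ := h (M-1) le_rfl
    exact ⟨g, h1, h2⟩
  intro n
  induction n with
  | zero =>
    intro _
    refine ⟨fun _ => 0, fun a b ha => absurd ha (Nat.not_lt_zero a), ?_, ?_⟩
    · intro B K hB _ w hwg _
      have hBe : B = ∅ := Finset.eq_empty_of_forall_notMem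
        (fun b hb => Nat.not_lt_zero b (hB b hb))
      subst hBe
      simpa using hwg
    · intro B K hB hcard
      have hBe : B = ∅ := Finset.eq_empty_of_forall_notMem
        (fun b hb => Nat.not_lt_zero b (hB b hb))
      subst hBe
      have hK : K = Finset.univ := by
        apply Finset.eq_univ_of_card
        have := Finset.card_le_univ K
        simp only [Finset.card_empty, zero_add] at hcard
        have : K.card ≤ Fintype.card (Fin M) := Finset.card_le_univ K
        rw [Fintype.card_fin] at this ⊢
        omega
      subst hK
      simpa using span_ee_top
  | succ n ih =>
    intro hn
    obtain ⟨g, horth, hindep, hspan⟩ := ih (by omega)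
    have hnM : n ≤ M - 2 := by omega
    set Rn : Finset ℕ := Finset.range n with hRn
    have hgON : ∀ i ∈ Rn, ∀ j ∈ Rn, ⟪g i, g j⟫ = if i = j then (1:ℝ) else 0 :=
      fun i hi j hj => horth i j (Finset.mem_range.mp hi) (Finset.mem_range.mp hj)
    set W : Submodule ℝ (EuclideanSpace ℝ (Fin M)) := span ℝ (g '' Rn) with hW
    -- the finite family of subspaces to avoid
    set Ps : Finset (Finset ℕ × Finset (Fin M)) :=
      (Rn.powerset ×ˢ (Finset.univ : Finset (Fin M)).powerset).filter
        (fun p => p.1.card + p.2.card ≤ M - 1) with hPs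
    set Us : Finset (Submodule ℝ (EuclideanSpace ℝ (Fin M))) :=
      Ps.image (fun p => span ℝ (g '' p.1 ∪ ee M '' p.2)) with hUs
    have hPsmem : ∀ (B' : Finset ℕ) (K : Finset (Fin M)), B' ⊆ Rn → B'.card + K.card ≤ M - 1 →
        span ℝ (g '' B' ∪ ee M '' K) ∈ Us := by
      intro B' K h1 h2
      exact Finset.mem_image.mpr ⟨(B', K), Finset.mem_filter.mpr
        ⟨Finset.mem_product.mpr ⟨Finset.mem_powerset.mpr h1,
          Finset.mem_powerset.mpr (Finset.subset_univ K)⟩, h2⟩, rfl⟩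
    -- properness of each avoided subspace
    have hproper : ∀ (B' : Finset ℕ) (K : Finset (Fin M)), B' ⊆ Rn →
        B'.card + K.card ≤ M - 1 → ¬ (Wᗮ ≤ span ℝ (g '' B' ∪ ee M '' K)) := by
      intro B' K hsub hcard hle
      set U : Submodule ℝ (EuclideanSpace ℝ (Fin M)) := span ℝ (g '' B' ∪ ee M '' K) with hU
      have hB'bd : ∀ b ∈ B', b < n := fun b hb => Finset.mem_range.mp (hsub hb)
      have hB'card : B'.card ≤ n := by
        have := Finset.card_le_card hsub
        rwa [Finset.card_range] at this
      have hKcard : K.card ≤ M := by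
        have := Finset.card_le_univ K
        simpa using this
      -- finrank bounds
      have hfrB' : finrank ℝ (span ℝ (g '' B')) = B'.card :=
        finrank_span_orthonormal B' g (fun i hi j hj => hgON i (hsub hi) j (hsub hj))
      have hfrK : finrank ℝ (span ℝ (ee M '' K)) = K.card :=
        finrank_span_orthonormal K (ee M) (fun i _ j _ => ee_orth i j)
      have hUfr : finrank ℝ U ≤ B'.card + K.card := by
        rw [hU, Submodule.span_union]
        have h4 := Submodule.finrank_sup_add_finrank_inf_eq
          (span ℝ (g '' B')) (span ℝ (ee M '' K))
        rw [hfrB', hfrK] at h4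
        omega
      have hfrO : finrank ℝ U + finrank ℝ Uᗮ = M := by
        have := Submodule.finrank_add_finrank_orthogonal U
        rwa [finrank_euclideanSpace, Fintype.card_fin] at this
      have hOrthLe : Uᗮ ≤ W :=
        (Submodule.orthogonal_le hle).trans (le_of_eq (Submodule.orthogonal_orthogonal W))
      -- every element of Uᗮ lies in a small intersection
      have hmem : ∀ z, z ∈ Uᗮ →
          z ∈ (span ℝ (g '' ↑(Rn \ B')) ⊓ span ℝ (ee M '' ↑(Finset.univ \ K))) := by
        intro z hz
        have hzW : z ∈ W := hOrthLe hz
        have hzB' : ∀ b ∈ B', ⟪g b, z⟫ = 0 := fun b hb =>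
          (Submodule.mem_orthogonal U z).mp hz (g b)
            (subset_span (Or.inl ⟨b, hb, rfl⟩))
        have hzK : ∀ i ∈ K, ⟪ee M i, z⟫ = 0 := fun i hi =>
          (Submodule.mem_orthogonal U z).mp hz (ee M i)
            (subset_span (Or.inr ⟨i, hi, rfl⟩))
        refine ⟨span_shrink Rn B' hsub g hgON hzW hzB', ?_⟩
        refine span_shrink Finset.univ K (Finset.subset_univ K) (ee M)
          (fun i _ j _ => ee_orth i j) ?_ hzK
        rw [span_ee_top]; trivial
      have hcardC : (Rn \ B').card = n - B'.card := by
        rw [Finset.card_sdiff_of_subset hsub, Finset.card_range]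
      have hcardKc : (Finset.univ \ K).card = M - K.card := by
        rw [Finset.card_sdiff_of_subset (Finset.subset_univ K), Finset.card_univ, Fintype.card_fin]
      have hCbd : ∀ b ∈ Rn \ B', b < n := fun b hb =>
        Finset.mem_range.mp (Finset.mem_sdiff.mp hb).1
      -- Uᗮ is nonzero
      have hne : Uᗮ ≠ ⊥ := by
        intro hb
        rw [hb, finrank_bot] at hfrO
        omega
      obtain ⟨z, hzU, hz0⟩ := (Submodule.ne_bot_iff _).mp hne
      by_cases hsmall : n ≤ B'.card + K.card
      · exact hz0 (hindep (Rn \ B') (Finset.univ \ K) hCbd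
          (by rw [hcardC, hcardKc]; omega) z (hmem z hzU).1 (hmem z hzU).2)
      · have hsup : span ℝ (g '' ↑(Rn \ B') ∪ ee M '' ↑(Finset.univ \ K)) = ⊤ :=
          hspan _ _ hCbd (by rw [hcardC, hcardKc]; omega)
        have h5 := Submodule.finrank_sup_add_finrank_inf_eq
          (span ℝ (g '' ↑(Rn \ B'))) (span ℝ (ee M '' ↑(Finset.univ \ K)))
        rw [← Submodule.span_union, hsup, finrank_top, finrank_euclideanSpace,
          Fintype.card_fin] at h5
        have hfrC : finrank ℝ (span ℝ (g '' ↑(Rn \ B'))) = (Rn \ B').card :=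
          finrank_span_orthonormal _ g (fun i hi j hj =>
            hgON i (Finset.mem_sdiff.mp hi).1 j (Finset.mem_sdiff.mp hj).1)
        have hfrKc : finrank ℝ (span ℝ (ee M '' ↑(Finset.univ \ K))) = (Finset.univ \ K).card :=
          finrank_span_orthonormal _ (ee M) (fun i _ j _ => ee_orth i j)
        have hle3 : finrank ℝ Uᗮ ≤
            finrank ℝ ((span ℝ (g '' ↑(Rn \ B')) ⊓ span ℝ (ee M '' ↑(Finset.univ \ K)) :
              Submodule ℝ (EuclideanSpace ℝ (Fin M)))) :=
          Submodule.finrank_mono (fun z hz => hmem z hz)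
        rw [hfrC, hfrKc, hcardC, hcardKc] at h5
        omega
    have hUsprop : ∀ U ∈ Us, ¬ Wᗮ ≤ U := by
      intro U hUmem hle
      obtain ⟨⟨B', K⟩, hmem2, rfl⟩ := Finset.mem_image.mp hUmem
      have h6 := Finset.mem_filter.mp hmem2
      have h7 := Finset.mem_product.mp h6.1
      exact hproper B' K (Finset.mem_powerset.mp h7.1) h6.2 hle
    obtain ⟨v, hvV, hvU⟩ := exists_avoid Wᗮ Us hUsprop
    have hv0 : v ≠ 0 := by
      intro h0
      refine hvU (span ℝ (g '' (∅ : Finset ℕ) ∪ ee M '' (∅ : Finset (Fin M))))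
        (hPsmem ∅ ∅ (Finset.empty_subset _) (by simp)) ?_
      rw [h0]; exact zero_mem _
    have hcnorm : ‖v‖ ≠ 0 := fun h => hv0 (norm_eq_zero.mp h)
    set gn : EuclideanSpace ℝ (Fin M) := ‖v‖⁻¹ • v with hgn
    have hgnV : gn ∈ Wᗮ := smul_mem _ _ hvV
    have hgnU : ∀ U ∈ Us, gn ∉ U := by
      intro U hUm hmemU
      refine hvU U hUm ?_
      have := smul_mem U ‖v‖ hmemU
      rwa [hgn, smul_smul, mul_inv_cancel₀ hcnorm, one_smul] at this
    have hgnorm : ⟪gn, gn⟫ = 1 := by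
      rw [hgn, real_inner_smul_left, real_inner_smul_right, real_inner_self_eq_norm_mul_norm]
      field_simp
    set g' : ℕ → EuclideanSpace ℝ (Fin M) := Function.update g n gn with hg'
    have hg'lt : ∀ b, b ≠ n → g' b = g b := fun b hb => Function.update_of_ne hb _ _
    have hg'n : g' n = gn := Function.update_self _ _ _
    have himg : ∀ B : Finset ℕ, (∀ b ∈ B, b ≠ n) → g' '' B = g '' B := by
      intro B hB
      exact Set.image_congr (fun b hb => hg'lt b (hB b hb))
    have hgnW : ∀ u ∈ W, ⟪u, gn⟫ = 0 := fun u hu => (Submodule.mem_orthogonal W gn).mp hgnV u hu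
    have hgW : ∀ b, b < n → g b ∈ W := fun b hb =>
      subset_span ⟨b, Finset.mem_coe.mpr (Finset.mem_range.mpr hb), rfl⟩
    refine ⟨g', ?_, ?_, ?_⟩
    · -- orthonormality
      intro a b ha hb
      by_cases han : a = n
      · by_cases hbn : b = n
        · rw [han, hbn, hg'n, hgnorm, if_pos rfl]
        · have hbn' : b < n := by omega
          rw [han, hg'n, hg'lt b hbn, real_inner_comm, hgnW _ (hgW b hbn'),
            if_neg (by omega)]
      · have han' : a < n := by omega
        by_cases hbn : b = n
        · rw [hbn, hg'lt a han, hg'n, hgnW _ (hgW a han'), if_neg (by omega)]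
        · have hbn' : b < n := by omega
          rw [hg'lt a han, hg'lt b hbn]
          exact horth a b han' hbn'
    · -- independence invariant
      intro B K hB hcard w hwg hwe
      by_cases hnB : n ∈ B
      · set B' : Finset ℕ := B.erase n with hB'def
        have hB' : ∀ b ∈ B', b < n := by
          intro b hb
          have h8 := (Finset.mem_erase.mp hb).1
          have h9 := hB b (Finset.erase_subset _ _ hb)
          omega
        have hBins : B = insert n B' := (Finset.insert_erase hnB).symm
        have himgB : g' '' ↑B = insert gn (g '' ↑B') := by
          rw [hBins, Finset.coe_insert, Set.image_insert_eq, hg'n,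
            himg B' (fun b hb => by have := hB' b hb; omega)]
        rw [himgB] at hwg
        obtain ⟨cc, z, hz, rfl⟩ := Submodule.mem_span_insert.mp hwg
        have hcards : B'.card + K.card ≤ M - 1 := by
          have : B.card = B'.card + 1 := by
            rw [hBins, Finset.card_insert_of_notMem (fun hh => by
              have := hB' n hh; omega)]
          omega
        by_cases hcc : cc = 0
        · subst hcc
          rw [zero_smul, zero_add] at hwe ⊢
          exact hindep B' K hB' (by omega) z hz hwe
        · exfalso
          have hUm := hPsmem B' K (fun b hb => Finset.mem_range.mpr (hB' b hb)) hcards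
          refine hgnU _ hUm ?_
          have hwU : cc • gn + z ∈ span ℝ (g '' ↑B' ∪ ee M '' ↑K) :=
            Submodule.span_mono Set.subset_union_right hwe
          have hzU : z ∈ span ℝ (g '' ↑B' ∪ ee M '' ↑K) :=
            Submodule.span_mono Set.subset_union_left hz
          have h10 : cc • gn ∈ span ℝ (g '' ↑B' ∪ ee M '' ↑K) := by
            have := Submodule.sub_mem _ hwU hzU
            simpa using this
          have := smul_mem _ cc⁻¹ h10
          rwa [smul_smul, inv_mul_cancel₀ hcc, one_smul] at this
      · have hBne : ∀ b ∈ B, b ≠ n := fun b hb hh => hnB (hh ▸ hb)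
        rw [himg B hBne] at hwg
        exact hindep B K (fun b hb => by have := hB b hb; have := hBne b hb; omega)
          hcard w hwg hwe
    · -- spanning invariant
      intro B K hB hcard
      by_cases hnB : n ∈ B
      · set B' : Finset ℕ := B.erase n with hB'def
        have hB' : ∀ b ∈ B', b < n := by
          intro b hb
          have h8 := (Finset.mem_erase.mp hb).1
          have h9 := hB b (Finset.erase_subset _ _ hb)
          omega
        have hBins : B = insert n B' := (Finset.insert_erase hnB).symm
        have himgB : g' '' ↑B = insert gn (g '' ↑B') := by
          rw [hBins, Finset.coe_insert, Set.image_insert_eq, hg'n,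
            himg B' (fun b hb => by have := hB' b hb; omega)]
        have hcardB : B.card = B'.card + 1 := by
          rw [hBins, Finset.card_insert_of_notMem (fun hh => by
            have := hB' n hh; omega)]
        by_cases hbig : M ≤ B'.card + K.card
        · have h11 := hspan B' K hB' hbig
          rw [eq_top_iff, ← h11]
          apply Submodule.span_mono
          apply Set.union_subset_union_left
          rw [← himg B' (fun b hb => by have := hB' b hb; omega)]
          have hsubB : (↑B' : Set ℕ) ⊆ (↑B : Set ℕ) := by
            rw [hBins]
            exact Finset.coe_subset.mpr (Finset.subset_insert _ _)
          exact Set.image_mono (f := g') hsubB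
        · have hexact : B'.card + K.card = M - 1 := by omega
          set U : Submodule ℝ (EuclideanSpace ℝ (Fin M)) :=
            span ℝ (g '' ↑B' ∪ ee M '' ↑K) with hUdef
          have hUm := hPsmem B' K (fun b hb => Finset.mem_range.mpr (hB' b hb)) hexact.le
          have hgnotU : gn ∉ U := hgnU _ hUm
          have hfrB' : finrank ℝ (span ℝ (g '' B')) = B'.card :=
            finrank_span_orthonormal B' g (fun i hi j hj =>
              horth i j (hB' i hi) (hB' j hj))
          have hfrK : finrank ℝ (span ℝ (ee M '' K)) = K.card :=
            finrank_span_orthonormal K (ee M) (fun i _ j _ => ee_orth i j)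
          have hbot : span ℝ (g '' ↑B') ⊓ span ℝ (ee M '' ↑K) = ⊥ := by
            rw [Submodule.eq_bot_iff]
            rintro x ⟨hx1, hx2⟩
            exact hindep B' K hB' (by omega) x hx1 hx2
          have hfrU : finrank ℝ U = M - 1 := by
            rw [hUdef, Submodule.span_union]
            have h12 := Submodule.finrank_sup_add_finrank_inf_eq
              (span ℝ (g '' ↑B')) (span ℝ (ee M '' ↑K))
            rw [hbot, finrank_bot, hfrB', hfrK] at h12
            omega
          have hgn0 : gn ≠ 0 := by
            intro hh
            rw [hh, inner_zero_left] at hgnorm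
            norm_num at hgnorm
          have hint2 : (ℝ ∙ gn) ⊓ U = ⊥ := by
            rw [Submodule.eq_bot_iff]
            rintro x ⟨hx1, hx2⟩
            obtain ⟨a, rfl⟩ := Submodule.mem_span_singleton.mp hx1
            by_cases ha : a = 0
            · rw [ha, zero_smul]
            · exfalso
              apply hgnotU
              have := smul_mem U a⁻¹ hx2
              rwa [smul_smul, inv_mul_cancel₀ ha, one_smul] at this
          have hone : finrank ℝ (ℝ ∙ gn) = 1 := finrank_span_singleton hgn0
          have h13 := Submodule.finrank_sup_add_finrank_inf_eq (ℝ ∙ gn) U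
          rw [hint2, finrank_bot, hone, hfrU] at h13
          have hspan2 : span ℝ (g' '' ↑B ∪ ee M '' ↑K) = (ℝ ∙ gn) ⊔ U := by
            rw [himgB, Set.insert_union, Submodule.span_insert, hUdef]
          rw [hspan2]
          apply Submodule.eq_top_of_finrank_eq
          rw [finrank_euclideanSpace, Fintype.card_fin]
          omega
      · have hBne : ∀ b ∈ B, b ≠ n := fun b hb hh => hnB (hh ▸ hb)
        rw [himg B hBne]
        exact hspan B K (fun b hb => by have := hB b hb; have := hBne b hb; omega) hcard
end GG
section MAIN
open Submodule RealInnerProductSpace Finset Module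

lemma spark (M : ℕ) (hM : 3 ≤ M) (g : ℕ → EuclideanSpace ℝ (Fin M))
    (hindep : ∀ (B : Finset ℕ) (K : Finset (Fin M)), (∀ b ∈ B, b < M - 1) →
      B.card + K.card ≤ M → ∀ w, w ∈ span ℝ (g '' B) → w ∈ span ℝ (ee M '' K) → w = 0)
    (horth : ∀ a b : ℕ, a < M - 1 → b < M - 1 → ⟪g a, g b⟫ = if a = b then (1:ℝ) else 0)
    (I : Finset (Fin M)) (B : Finset ℕ) (hB : ∀ b ∈ B, b < M - 1)
    (hcard : I.card + B.card = M) (w : EuclideanSpace ℝ (Fin M))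
    (hwI : ∀ i ∈ I, ⟪ee M i, w⟫ = 0) (hwB : ∀ b ∈ B, ⟪g b, w⟫ = 0) : w = 0 := by
  have hfrB : finrank ℝ (span ℝ (g '' B)) = B.card :=
    finrank_span_orthonormal B g (fun i hi j hj => horth i j (hB i hi) (hB j hj))
  have hfrI : finrank ℝ (span ℝ (ee M '' I)) = I.card :=
    finrank_span_orthonormal I (ee M) (fun i _ j _ => ee_orth i j)
  have hbot : span ℝ (g '' ↑B) ⊓ span ℝ (ee M '' ↑I) = ⊥ := by
    rw [Submodule.eq_bot_iff]
    rintro z ⟨hz1, hz2⟩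
    exact hindep B I hB (by omega) z hz1 hz2
  have h1 := Submodule.finrank_sup_add_finrank_inf_eq
    (span ℝ (g '' ↑B)) (span ℝ (ee M '' ↑I))
  rw [hbot, finrank_bot, hfrB, hfrI] at h1
  have htop : span ℝ (g '' ↑B) ⊔ span ℝ (ee M '' ↑I) = ⊤ := by
    apply Submodule.eq_top_of_finrank_eq
    rw [finrank_euclideanSpace, Fintype.card_fin]
    omega
  rw [← Submodule.span_union] at htop
  have hz : ∀ u ∈ span ℝ (g '' ↑B ∪ ee M '' ↑I), ⟪u, w⟫ = 0 := by
    apply inner_span_zero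
    rintro u (⟨b, hb, rfl⟩ | ⟨i, hi, rfl⟩)
    · exact hwB b hb
    · exact hwI i hi
  have := hz w (by rw [htop]; trivial)
  exact inner_self_eq_zero.mp this

/-- Phase retrieval in ℝ^M is possible with 2M-1 subspaces of arbitrarily prescribed
dimensions below M-1. -/
theorem stmt_18 (M : ℕ) (hM : 2 ≤ M) (d : Fin (2 * M - 1) → ℕ)
    (hd : ∀ n, 1 ≤ d n ∧ d n < M - 1) :
    ∃ W : Fin (2 * M - 1) → Submodule ℝ (EuclideanSpace ℝ (Fin M)),
      (∀ n, Module.finrank ℝ (W n) = d n) ∧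
      ∀ x y : EuclideanSpace ℝ (Fin M),
        (∀ n, ‖(W n).orthogonalProjectionOnto x‖ ^ 2 = ‖(W n).orthogonalProjectionOnto y‖ ^ 2) →
        x = y ∨ x = -y := by
  classical
  rcases Nat.lt_or_ge M 3 with hM3 | hM3
  · exfalso
    have h0 := hd ⟨0, by omega⟩
    omega
  obtain ⟨g, horth, hindep⟩ := exists_good_g M hM3
  obtain ⟨SE, hSEcard, hSEind⟩ := exists_indep_subsets M (by omega)
    (fun i => d ⟨i.1, by have := i.2; omega⟩)
    (fun i => ⟨(hd ⟨i.1, by have := i.2; omega⟩).1,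
      le_of_lt (hd ⟨i.1, by have := i.2; omega⟩).2⟩)
  obtain ⟨SG, hSGcard, hSGind⟩ := exists_indep_subsets (M-1) (by omega)
    (fun j => d ⟨M + j.1, by have := j.2; omega⟩)
    (fun j => ⟨(hd ⟨M + j.1, by have := j.2; omega⟩).1,
      Nat.le_pred_of_lt (hd ⟨M + j.1, by have := j.2; omega⟩).2⟩)
  -- orthonormality data
  have hGon : ∀ (s : Finset (Fin (M-1))), ∀ i ∈ s.image Fin.val, ∀ j ∈ s.image Fin.val,
      ⟪g i, g j⟫ = if i = j then (1:ℝ) else 0 := by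
    intro s i hi j hj
    obtain ⟨i', _, rfl⟩ := Finset.mem_image.mp hi
    obtain ⟨j', _, rfl⟩ := Finset.mem_image.mp hj
    exact horth _ _ (by have := i'.2; omega) (by have := j'.2; omega)
  have hEon : ∀ (s : Finset (Fin M)), ∀ i ∈ s, ∀ j ∈ s,
      ⟪ee M i, ee M j⟫ = if i = j then (1:ℝ) else 0 := fun s i _ j _ => ee_orth i j
  set W : Fin (2 * M - 1) → Submodule ℝ (EuclideanSpace ℝ (Fin M)) := fun n =>
    if h : (n : ℕ) < M
      then span ℝ (ee M '' (SE ⟨n.1, h⟩))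
      else span ℝ (g '' ((SG ⟨n.1 - M, by have := n.2; omega⟩).image Fin.val)) with hWdef
  have hWE : ∀ (n : Fin (2 * M - 1)) (hn : (n : ℕ) < M),
      W n = span ℝ (ee M '' (SE ⟨n.1, hn⟩)) := by
    intro n hn
    simp only [hWdef]
    rw [dif_pos hn]
  have hWG : ∀ (n : Fin (2 * M - 1)) (hn : ¬ (n : ℕ) < M) (hn2 : (n : ℕ) - M < M - 1),
      W n = span ℝ (g '' ((SG ⟨n.1 - M, hn2⟩).image Fin.val)) := by
    intro n hn hn2
    simp only [hWdef]
    rw [dif_neg hn]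
  refine ⟨W, ?_, ?_⟩
  · intro n
    by_cases h : (n : ℕ) < M
    · rw [hWE n h, finrank_span_orthonormal _ (ee M) (hEon _), hSEcard]
    · have hn2 : (n : ℕ) - M < M - 1 := by have := n.2; omega
      rw [hWG n h hn2, finrank_span_orthonormal _ g (hGon _),
        Finset.card_image_of_injective _ Fin.val_injective, hSGcard]
      refine congrArg d (Fin.ext ?_)
      show M + ((n : ℕ) - M) = (n : ℕ)
      omega
  · intro x y hxy
    set aE : EuclideanSpace ℝ (Fin M) := WithLp.toLp 2 (fun i => ⟪ee M i, x⟫^2 - ⟪ee M i, y⟫^2) with haE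
    have haE0 : aE = 0 := by
      refine recover M (by omega) SE hSEind aE ?_
      intro i
      set n₀ : Fin (2 * M - 1) := ⟨i.1, by have := i.2; omega⟩ with hn₀def
      have hn₀ : (n₀ : ℕ) < M := i.2
      have h := hxy n₀
      rw [hWE n₀ hn₀] at h
      have hidx : (⟨(n₀ : ℕ), hn₀⟩ : Fin M) = i := Fin.ext rfl
      rw [hidx] at h
      rw [proj_norm_sq (SE i) (ee M) (hEon _) x, proj_norm_sq (SE i) (ee M) (hEon _) y] at h
      have hsplit : ∑ j ∈ SE i, aE j
          = ∑ j ∈ SE i, ⟪ee M j, x⟫^2 - ∑ j ∈ SE i, ⟪ee M j, y⟫^2 := by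
        rw [← Finset.sum_sub_distrib]
      rw [hsplit, h, sub_self]
    set aG : EuclideanSpace ℝ (Fin (M-1)) := WithLp.toLp 2 (fun j => ⟪g j.1, x⟫^2 - ⟪g j.1, y⟫^2) with haG
    have haG0 : aG = 0 := by
      refine recover (M-1) (by omega) SG hSGind aG ?_
      intro j
      set n₀ : Fin (2 * M - 1) := ⟨M + j.1, by have := j.2; omega⟩ with hn₀def
      have hn₀ : ¬ (n₀ : ℕ) < M := by
        show ¬ M + j.1 < M
        omega
      have hn₂ : (n₀ : ℕ) - M < M - 1 := by have := j.2; show M + j.1 - M < M - 1; omega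
      have h := hxy n₀
      rw [hWG n₀ hn₀ hn₂] at h
      have hidx : (⟨(n₀ : ℕ) - M, hn₂⟩ : Fin (M-1)) = j := by
        refine Fin.ext ?_
        show M + j.1 - M = j.1
        omega
      rw [hidx] at h
      rw [proj_norm_sq _ g (hGon (SG j)) x, proj_norm_sq _ g (hGon (SG j)) y] at h
      rw [Finset.sum_image (fun a _ b _ hab => Fin.val_injective hab),
        Finset.sum_image (fun a _ b _ hab => Fin.val_injective hab)] at h
      have hsplit : ∑ jj ∈ SG j, aG jj
          = ∑ jj ∈ SG j, ⟪g jj.1, x⟫^2 - ∑ jj ∈ SG j, ⟪g jj.1, y⟫^2 := by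
        rw [← Finset.sum_sub_distrib]
      rw [hsplit, h, sub_self]
    have hE0 : ∀ i : Fin M, ⟪ee M i, x - y⟫ * ⟪ee M i, x + y⟫ = 0 := by
      intro i
      have h : aE i = 0 := by rw [haE0]; rfl
      rw [inner_sub_right, inner_add_right]
      have hr : (⟪ee M i, x⟫ - ⟪ee M i, y⟫) * (⟪ee M i, x⟫ + ⟪ee M i, y⟫)
          = ⟪ee M i, x⟫^2 - ⟪ee M i, y⟫^2 := by ring
      rw [hr]
      exact h
    have hG0 : ∀ j : Fin (M-1), ⟪g j.1, x - y⟫ * ⟪g j.1, x + y⟫ = 0 := by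
      intro j
      have h : aG j = 0 := by rw [haG0]; rfl
      rw [inner_sub_right, inner_add_right]
      have hr : (⟪g j.1, x⟫ - ⟪g j.1, y⟫) * (⟪g j.1, x⟫ + ⟪g j.1, y⟫)
          = ⟪g j.1, x⟫^2 - ⟪g j.1, y⟫^2 := by ring
      rw [hr]
      exact h
    set TE : Finset (Fin M) := Finset.univ.filter (fun i => ⟪ee M i, x - y⟫ = 0) with hTE
    set TG : Finset (Fin (M-1)) := Finset.univ.filter (fun j => ⟪g j.1, x - y⟫ = 0) with hTG
    have hTEc : ∀ i ∈ TEᶜ, ⟪ee M i, x + y⟫ = 0 := by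
      intro i hi
      have h1 : ¬ (⟪ee M i, x - y⟫ = 0) := by
        intro hh
        rw [Finset.mem_compl, hTE, Finset.mem_filter] at hi
        exact hi ⟨Finset.mem_univ i, hh⟩
      rcases mul_eq_zero.mp (hE0 i) with h | h
      · exact absurd h h1
      · exact h
    have hTGc : ∀ j ∈ TGᶜ, ⟪g j.1, x + y⟫ = 0 := by
      intro j hj
      have h1 : ¬ (⟪g j.1, x - y⟫ = 0) := by
        intro hh
        rw [Finset.mem_compl, hTG, Finset.mem_filter] at hj
        exact hj ⟨Finset.mem_univ j, hh⟩
      rcases mul_eq_zero.mp (hG0 j) with h | h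
      · exact absurd h h1
      · exact h
    have hcards : TE.card + TEᶜ.card = M := by
      rw [Finset.card_add_card_compl, Fintype.card_fin]
    have hcards2 : TG.card + TGᶜ.card = M - 1 := by
      rw [Finset.card_add_card_compl, Fintype.card_fin]
    have key : ∀ (T1 : Finset (Fin M)) (T2 : Finset (Fin (M-1))) (z : EuclideanSpace ℝ (Fin M)),
        (∀ i ∈ T1, ⟪ee M i, z⟫ = 0) → (∀ j ∈ T2, ⟪g j.1, z⟫ = 0) →
        M ≤ T1.card + T2.card → z = 0 := by
      intro T1 T2 z hz1 hz2 hbig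
      by_cases hI : M ≤ T1.card
      · obtain ⟨I, hIsub, hIcard⟩ := Finset.exists_subset_card_eq hI
        refine spark M hM3 g hindep horth I ∅ (by simp) (by simp [hIcard]) z
          (fun i hi => hz1 i (hIsub hi)) (by simp)
      · obtain ⟨B0, hB0sub, hB0card⟩ := Finset.exists_subset_card_eq
          (show M - T1.card ≤ T2.card by omega)
        refine spark M hM3 g hindep horth T1 (B0.image Fin.val) ?_ ?_ z
          (fun i hi => hz1 i hi) ?_
        · intro b hb
          obtain ⟨b', _, rfl⟩ := Finset.mem_image.mp hb
          have := b'.2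
          omega
        · rw [Finset.card_image_of_injective _ Fin.val_injective, hB0card]
          omega
        · intro b hb
          obtain ⟨b', hb', rfl⟩ := Finset.mem_image.mp hb
          exact hz2 b' (hB0sub hb')
    by_cases hsplit : M ≤ TE.card + TG.card
    · left
      have := key TE TG (x - y)
        (fun i hi => (Finset.mem_filter.mp hi).2)
        (fun j hj => (Finset.mem_filter.mp hj).2) hsplit
      rwa [sub_eq_zero] at this
    · right
      have hge : M ≤ TEᶜ.card + TGᶜ.card := by omega
      have := key TEᶜ TGᶜ (x + y) hTEc hTGc hge
      rw [add_eq_zero_iff_eq_neg] at this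
      exact this
end MAIN
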